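/- arXiv:math/0512427 — 2 statements merged into one kernel-verified Lean document; each statement's English description precedes it below -/
import Mathlib

section
/- Let p ≠ 2 be a prime. Let ξ₁, ξ₂, … be independent {0,1}-valued Bernoulli(1/2) random variables on the sample space Ω₂ = {0,1}^∞ with the uniform cylinder measure, and let S_n = ξ₁ + ⋯ + ξ_n. For m ∈ {0, 1, …, p^s − 1}, r ∈ {0, …, m}, and l ≥ s, as n → m in the p-adic topology, the (rational-valued, viewed in ℚ_p) probabilities P(S_n ≡ r mod p^l) = 2^{-n} Σ_{j ≡ r mod p^l, 0 ≤ j ≤ n} C(n, j) converge in ℚ_p to C(m, r)/2^m. -/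
open Filter Topology

section PadicCombinatorialAux

open Finset

variable (p : ℕ) [hp : Fact p.Prime] (l : ℕ)

set_option linter.unusedSectionVars false

private instance : NeZero (p ^ l) := ⟨pow_ne_zero _ hp.out.ne_zero⟩

/-- `T n σ = ∑_{j ≤ n, j ≡ σ mod p^l} C(n,j)` as an integer. -/
private def Tb (n : ℕ) (σ : ZMod (p ^ l)) : ℤ :=
  ∑ j ∈ range (n + 1), if (j : ZMod (p ^ l)) = σ then (n.choose j : ℤ) else 0

private lemma Tb_zero (σ : ZMod (p ^ l)) : Tb p l 0 σ = if σ = 0 then 1 else 0 := by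
  simp [Tb, eq_comm]

private lemma Tb_succ (n : ℕ) (σ : ZMod (p ^ l)) :
    Tb p l (n + 1) σ = Tb p l n σ + Tb p l n (σ - 1) := by
  have key : ∀ i : ℕ,
      (if (((i + 1 : ℕ)) : ZMod (p ^ l)) = σ then ((n + 1).choose (i + 1) : ℤ) else 0)
      = (if (((i + 1 : ℕ)) : ZMod (p ^ l)) = σ then (n.choose (i + 1) : ℤ) else 0)
        + (if ((i : ℕ) : ZMod (p ^ l)) = σ - 1 then (n.choose i : ℤ) else 0) := by
    intro i
    have hcond : (((i + 1 : ℕ)) : ZMod (p ^ l)) = σ ↔ ((i : ℕ) : ZMod (p ^ l)) = σ - 1 := by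
      push_cast
      constructor
      · intro h; rw [← h]; ring
      · intro h; rw [h]; ring
    by_cases h : (((i + 1 : ℕ)) : ZMod (p ^ l)) = σ
    · rw [if_pos h, if_pos h, if_pos (hcond.mp h), Nat.choose_succ_succ]
      push_cast; ring
    · rw [if_neg h, if_neg h, if_neg (fun hh => h (hcond.mpr hh))]; ring
  show (∑ j ∈ range (n + 1 + 1), if (j : ZMod (p ^ l)) = σ then ((n + 1).choose j : ℤ) else 0) = _
  rw [Finset.sum_range_succ' _ (n + 1)]
  simp only [key]
  rw [Finset.sum_add_distrib]
  have h0 : (if ((0 : ℕ) : ZMod (p ^ l)) = σ then (((n + 1).choose 0 : ℕ) : ℤ) else 0)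
      = (if ((0 : ℕ) : ZMod (p ^ l)) = σ then ((n.choose 0 : ℕ) : ℤ) else 0) := by simp
  have h1 : (∑ i ∈ range (n + 1),
        if (((i + 1 : ℕ)) : ZMod (p ^ l)) = σ then (n.choose (i + 1) : ℤ) else 0)
      + (if ((0 : ℕ) : ZMod (p ^ l)) = σ then ((n.choose 0 : ℕ) : ℤ) else 0)
      = Tb p l n σ := by
    rw [← Finset.sum_range_succ'
      (fun j => if ((j : ℕ) : ZMod (p ^ l)) = σ then (n.choose j : ℤ) else 0) (n + 1)]
    rw [Finset.sum_range_succ]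
    simp [Tb, Nat.choose_succ_self]
  have h2 : (∑ i ∈ range (n + 1),
      if ((i : ℕ) : ZMod (p ^ l)) = σ - 1 then (n.choose i : ℤ) else 0) = Tb p l n (σ - 1) := rfl
  rw [h0, h2]
  linarith [h1]

private lemma Tb_add (a : ℕ) : ∀ (b : ℕ) (σ : ZMod (p ^ l)),
    Tb p l (a + b) σ = ∑ t : ZMod (p ^ l), Tb p l a t * Tb p l b (σ - t) := by
  intro b
  induction b with
  | zero =>
    intro σ
    have hterm : ∀ t : ZMod (p ^ l),
        Tb p l a t * Tb p l 0 (σ - t) = if t = σ then Tb p l a t else 0 := by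
      intro t
      rw [Tb_zero]
      by_cases h : t = σ
      · simp [h]
      · have h' : ¬(σ - t = 0) := fun hh => h (sub_eq_zero.mp hh).symm
        simp [h, h']
    simp only [Nat.add_zero, hterm, Finset.sum_ite_eq' Finset.univ σ, Finset.mem_univ, if_true]
  | succ b ih =>
    intro σ
    have hab : a + (b + 1) = (a + b) + 1 := by omega
    rw [hab, Tb_succ, ih σ, ih (σ - 1), ← Finset.sum_add_distrib]
    refine Finset.sum_congr rfl fun t _ => ?_
    rw [Tb_succ]
    have h' : σ - 1 - t = σ - t - 1 := by ring
    rw [h']; ring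

private lemma Tb_q (u : ZMod (p ^ l)) :
    Tb p l (p ^ l) u = (((p ^ l).choose u.val : ℕ) : ℤ) + (if u = 0 then 1 else 0) := by
  show (∑ j ∈ range (p ^ l + 1), if (j : ZMod (p ^ l)) = u then ((p ^ l).choose j : ℤ) else 0) = _
  rw [Finset.sum_range_succ]
  have h1 : ((p ^ l : ℕ) : ZMod (p ^ l)) = 0 := ZMod.natCast_self _
  have h2 : (∑ j ∈ range (p ^ l), if ((j : ℕ) : ZMod (p ^ l)) = u
      then ((p ^ l).choose j : ℤ) else 0) = (((p ^ l).choose u.val : ℕ) : ℤ) := by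
    rw [Finset.sum_eq_single u.val]
    · rw [if_pos (ZMod.natCast_zmod_val u)]
    · intro j hj hne
      rw [if_neg]
      intro hc
      exact hne (by rw [← ZMod.val_cast_of_lt (Finset.mem_range.mp hj), hc])
    · intro h; exact absurd (Finset.mem_range.mpr (ZMod.val_lt u)) h
  rw [h2, h1, Nat.choose_self]
  congr 1
  by_cases h : u = 0 <;> simp [h, eq_comm]

private lemma Tb_q_zmod (u : ZMod (p ^ l)) :
    ((Tb p l (p ^ l) u : ℤ) : ZMod p) = if u = 0 then 2 else 0 := by
  rw [Tb_q]
  by_cases h : u = 0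
  · simp [h]
  · rw [if_neg h, if_neg h]
    have h0 : u.val ≠ 0 := fun hh => h ((ZMod.val_eq_zero u).mp hh)
    have h1 : u.val ≠ p ^ l := Nat.ne_of_lt (ZMod.val_lt u)
    have hdvd := Nat.Prime.dvd_choose_pow hp.out h0 h1
    push_cast
    simp [(ZMod.natCast_eq_zero_iff _ _).mpr hdvd]

private lemma two_pow_q : ((2 : ZMod p)) ^ (p ^ l) = 2 := by
  induction l with
  | zero => simp
  | succ n ih => rw [pow_succ, pow_mul, ih, ZMod.pow_card]

private lemma Tb_base_zmod : ∀ (k : ℕ) (σ : ZMod (p ^ l)),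
    ((Tb p l (p ^ l * k) σ : ℤ) : ZMod p)
      = if σ = 0 then (2 : ZMod p) ^ (p ^ l * k) else 0 := by
  intro k
  induction k with
  | zero =>
    intro σ
    simp only [Nat.mul_zero, Tb_zero, pow_zero]
    by_cases h : σ = 0 <;> simp [h]
  | succ k ih =>
    intro σ
    have hsplit : p ^ l * (k + 1) = p ^ l * k + p ^ l := by ring
    rw [hsplit, Tb_add]
    push_cast
    have hterm : ∀ t : ZMod (p ^ l),
        ((Tb p l (p ^ l * k) t : ℤ) : ZMod p) * ((Tb p l (p ^ l) (σ - t) : ℤ) : ZMod p)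
        = if t = 0 then (if σ = 0 then (2 : ZMod p) ^ (p ^ l * k) * 2 else 0) else 0 := by
      intro t
      rw [ih t, Tb_q_zmod]
      by_cases h : t = 0
      · subst h
        simp only [if_pos rfl, sub_zero]
        by_cases hσ : σ = 0 <;> simp [hσ]
      · simp [h]
    rw [Finset.sum_congr rfl fun t _ => hterm t,
      Finset.sum_ite_eq' Finset.univ (0 : ZMod (p ^ l))]
    simp only [Finset.mem_univ, if_true]
    by_cases hσ : σ = 0
    · rw [if_pos hσ, if_pos hσ]
      rw [pow_add, two_pow_q]
    · rw [if_neg hσ, if_neg hσ]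

private lemma Tb_powstep (e b : ℕ) (c : ZMod (p ^ l) → ℤ)
    (hc : ∀ t, Tb p l b t = (if t = 0 then (2 : ℤ) ^ b else 0) + (p : ℤ) ^ e * c t) :
    ∀ j : ℕ, ∃ d : ZMod (p ^ l) → ℤ, ∀ σ,
      Tb p l (j * b) σ = (if σ = 0 then (2 : ℤ) ^ (j * b) else 0)
        + (j : ℤ) * 2 ^ ((j - 1) * b) * (p : ℤ) ^ e * c σ + (p : ℤ) ^ (2 * e) * d σ := by
  intro j
  induction j with
  | zero =>
    exact ⟨fun _ => 0, fun σ => by simp [Tb_zero]⟩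
  | succ j ih =>
    obtain ⟨d, hd⟩ := ih
    refine ⟨fun σ => (j : ℤ) * 2 ^ ((j - 1) * b) * (∑ t : ZMod (p ^ l), c t * c (σ - t))
      + 2 ^ b * d σ + (p : ℤ) ^ e * (∑ t : ZMod (p ^ l), d t * c (σ - t)), fun σ => ?_⟩
    have hsplit : (j + 1) * b = j * b + b := Nat.succ_mul j b
    rw [hsplit, Tb_add p l (j * b) b σ]
    have hexp : ∀ t : ZMod (p ^ l),
        Tb p l (j * b) t * Tb p l b (σ - t)
        = ((if t = 0 then (if σ = 0 then (2 : ℤ) ^ (j * b) * 2 ^ b else 0) else 0)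
          + (if t = 0 then (2 : ℤ) ^ (j * b) * ((p : ℤ) ^ e * c σ) else 0))
          + ((if σ - t = 0 then ((j : ℤ) * 2 ^ ((j - 1) * b) * (p : ℤ) ^ e * c σ) * 2 ^ b else 0)
          + (if σ - t = 0 then ((p : ℤ) ^ (2 * e) * d σ) * 2 ^ b else 0))
          + (((j : ℤ) * 2 ^ ((j - 1) * b) * (p : ℤ) ^ e * c t) * ((p : ℤ) ^ e * c (σ - t))
          + ((p : ℤ) ^ (2 * e) * d t) * ((p : ℤ) ^ e * c (σ - t))) := by
      intro t
      rw [hd t, hc (σ - t)]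
      have h00 : (0 : ZMod (p ^ l)) = 0 := rfl
      rcases eq_or_ne t 0 with h | h
      · subst h
        simp only [sub_zero]
        rcases eq_or_ne σ 0 with hσ | hσ
        · subst hσ
          simp only [eq_self_iff_true, ite_true]
          ring
        · simp only [if_neg hσ, eq_self_iff_true, ite_true]
          ring
      · rcases eq_or_ne (σ - t) 0 with h2 | h2
        · have ht : σ = t := sub_eq_zero.mp h2
          subst ht
          simp only [sub_self, eq_self_iff_true, ite_true, if_neg h]
          ring
        · simp only [if_neg h, if_neg h2]
          ring
    rw [Finset.sum_congr rfl fun t _ => hexp t]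
    rw [Finset.sum_add_distrib, Finset.sum_add_distrib, Finset.sum_add_distrib,
      Finset.sum_add_distrib, Finset.sum_add_distrib]
    have e1 : (∑ t : ZMod (p ^ l),
          if t = 0 then (if σ = 0 then (2 : ℤ) ^ (j * b) * 2 ^ b else 0) else 0)
        = (if σ = 0 then (2 : ℤ) ^ (j * b + b) else 0) := by
      rw [Finset.sum_ite_eq' Finset.univ (0 : ZMod (p ^ l))]
      simp only [Finset.mem_univ, if_true]
      rw [pow_add]
    have e2 : (∑ t : ZMod (p ^ l), if t = 0 then (2 : ℤ) ^ (j * b) * ((p : ℤ) ^ e * c σ) else 0)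
        = (2 : ℤ) ^ (j * b) * ((p : ℤ) ^ e * c σ) := by
      rw [Finset.sum_ite_eq' Finset.univ (0 : ZMod (p ^ l))]
      simp
    have hsub : ∀ X : ℤ, (∑ t : ZMod (p ^ l), if σ - t = 0 then X else 0) = X := by
      intro X
      have h' : ∀ t : ZMod (p ^ l), (if σ - t = 0 then X else 0) = (if t = σ then X else 0) := by
        intro t
        by_cases h : t = σ
        · subst h; simp
        · rw [if_neg h, if_neg (fun hh => h (sub_eq_zero.mp hh).symm)]
      rw [Finset.sum_congr rfl fun t _ => h' t, Finset.sum_ite_eq' Finset.univ σ]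
      simp
    have e4 : (∑ t : ZMod (p ^ l),
          ((j : ℤ) * 2 ^ ((j - 1) * b) * (p : ℤ) ^ e * c t) * ((p : ℤ) ^ e * c (σ - t)))
        = (p : ℤ) ^ (2 * e) * ((j : ℤ) * 2 ^ ((j - 1) * b)
            * ∑ t : ZMod (p ^ l), c t * c (σ - t)) := by
      simp only [Finset.mul_sum]
      exact Finset.sum_congr rfl fun t _ => by ring
    have e5 : (∑ t : ZMod (p ^ l), ((p : ℤ) ^ (2 * e) * d t) * ((p : ℤ) ^ e * c (σ - t)))
        = (p : ℤ) ^ (2 * e) * ((p : ℤ) ^ e * ∑ t : ZMod (p ^ l), d t * c (σ - t)) := by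
      simp only [Finset.mul_sum]
      exact Finset.sum_congr rfl fun t _ => by ring
    rw [e1, e2, hsub, hsub, e4, e5]
    have hj2 : (j : ℤ) * 2 ^ ((j - 1) * b) * 2 ^ b = (j : ℤ) * 2 ^ (j * b) := by
      cases j with
      | zero => simp
      | succ j =>
        rw [Nat.succ_sub_one, Nat.succ_mul, pow_add]
        ring
    push_cast [Nat.succ_sub_one]
    linear_combination (p : ℤ) ^ e * c σ * hj2

private lemma Tb_base (k : ℕ) (σ : ZMod (p ^ l)) :
    ∃ c : ℤ, Tb p l (p ^ l * k) σ = (if σ = 0 then (2 : ℤ) ^ (p ^ l * k) else 0) + (p : ℤ) * c := by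
  have h := Tb_base_zmod p l k σ
  have h2 : ((Tb p l (p ^ l * k) σ - (if σ = 0 then (2 : ℤ) ^ (p ^ l * k) else 0) : ℤ)
      : ZMod p) = 0 := by
    push_cast
    rw [h]
    by_cases hσ : σ = 0
    · simp [hσ]
    · simp [hσ]
  obtain ⟨c, hc⟩ := (ZMod.intCast_zmod_eq_zero_iff_dvd _ _).mp h2
  exact ⟨c, by linarith [hc]⟩

private lemma Tb_main : ∀ (e b : ℕ), p ^ (l + e) ∣ b → ∀ σ : ZMod (p ^ l), ∃ c : ℤ,
    Tb p l b σ = (if σ = 0 then (2 : ℤ) ^ b else 0) + (p : ℤ) ^ (e + 1) * c := by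
  intro e
  induction e with
  | zero =>
    intro b hb σ
    obtain ⟨k, rfl⟩ := hb
    obtain ⟨c, hc⟩ := Tb_base p l k σ
    refine ⟨c, ?_⟩
    simp only [Nat.add_zero] at *
    rw [hc]; ring
  | succ e ih =>
    intro b hb σ
    obtain ⟨k, rfl⟩ := hb
    have hb' : p ^ (l + e) ∣ p ^ (l + e) * k := ⟨k, rfl⟩
    choose c hc using ih (p ^ (l + e) * k) hb'
    obtain ⟨d, hd⟩ := Tb_powstep p l (e + 1) (p ^ (l + e) * k) c hc p
    refine ⟨2 ^ ((p - 1) * (p ^ (l + e) * k)) * c σ + (p : ℤ) ^ e * d σ, ?_⟩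
    have hpb : p ^ (l + (e + 1)) * k = p * (p ^ (l + e) * k) := by ring
    rw [hpb, hd σ]
    ring

private lemma Tb_eq_choose (n r : ℕ) (hn : n < p ^ l) (hrn : r ≤ n) :
    Tb p l n ((r : ZMod (p ^ l))) = (n.choose r : ℤ) := by
  show (∑ j ∈ range (n + 1), if (j : ZMod (p ^ l)) = (r : ZMod (p ^ l))
      then (n.choose j : ℤ) else 0) = _
  rw [Finset.sum_eq_single r]
  · simp
  · intro j hj hne
    rw [if_neg]
    intro hc
    have hj' : j < p ^ l := lt_of_le_of_lt (Nat.lt_succ_iff.mp (Finset.mem_range.mp hj)) hn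
    have hr' : r < p ^ l := lt_of_le_of_lt hrn hn
    have hmod := (ZMod.natCast_eq_natCast_iff' j r (p ^ l)).mp hc
    rw [Nat.mod_eq_of_lt hj', Nat.mod_eq_of_lt hr'] at hmod
    exact hne hmod
  · intro h
    exact absurd (Finset.mem_range.mpr (by omega)) h

/-- Key decomposition: if `p^(l+e) ∣ b` then
`T(m+b, r) = C(m,r) * 2^b + p^(e+1) * E`. -/
private lemma Tb_decomp (m r e b : ℕ) (hm : m < p ^ l) (hr : r ≤ m)
    (hb : p ^ (l + e) ∣ b) :
    ∃ E : ℤ, Tb p l (m + b) ((r : ZMod (p ^ l)))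
      = (m.choose r : ℤ) * 2 ^ b + (p : ℤ) ^ (e + 1) * E := by
  choose c hc using Tb_main p l e b hb
  rw [Tb_add p l m b]
  have hterm : ∀ t : ZMod (p ^ l),
      Tb p l m t * Tb p l b ((r : ZMod (p ^ l)) - t)
      = (if t = (r : ZMod (p ^ l)) then Tb p l m t * 2 ^ b else 0)
        + (p : ℤ) ^ (e + 1) * (Tb p l m t * c ((r : ZMod (p ^ l)) - t)) := by
    intro t
    rw [hc ((r : ZMod (p ^ l)) - t)]
    by_cases h : t = (r : ZMod (p ^ l))
    · subst h
      simp only [sub_self, eq_self_iff_true, ite_true]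
      ring
    · rw [if_neg h, if_neg (fun hh => h (sub_eq_zero.mp hh).symm)]
      ring
  rw [Finset.sum_congr rfl fun t _ => hterm t, Finset.sum_add_distrib, ← Finset.mul_sum]
  rw [Finset.sum_ite_eq' Finset.univ ((r : ZMod (p ^ l)))]
  simp only [Finset.mem_univ, if_true]
  rw [Tb_eq_choose p l m r hm hr]
  exact ⟨_, rfl⟩

end PadicCombinatorialAux

set_option maxHeartbeats 1000000 in
/-- Theorem 3.1: p-adic asymptotics of combinatorial probabilities.
`P(S_n ∈ U_{1/p^l}(r)) = 2^{-n} ∑_{j ≤ n, j ≡ r mod p^l} C(n,j)`, viewed in `ℚ_p`,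
converges to `C(m,r)/2^m` as `n → m` in the `p`-adic topology. -/
theorem padic_combinatorial_asymptotics (p : ℕ) [Fact p.Prime] (hp2 : p ≠ 2)
    (s : ℕ) (hs : 1 ≤ s) (m : ℕ) (hm : m < p ^ s) (r : ℕ) (hr : r ≤ m)
    (l : ℕ) (hl : s ≤ l) (N : ℕ → ℕ)
    (hN : Tendsto (fun k => ((N k : ℚ_[p]))) atTop (𝓝 ((m : ℚ_[p])))) :
    Tendsto
      (fun k =>
        ((((∑ j ∈ Finset.range (N k + 1),
              if j % p ^ l = r then (Nat.choose (N k) j : ℚ) else 0) / 2 ^ (N k)) : ℚ) : ℚ_[p]))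
      atTop (𝓝 ((Nat.choose m r : ℚ_[p]) / 2 ^ m)) := by
  have hp := (Fact.out : p.Prime)
  have hml : m < p ^ l := lt_of_lt_of_le hm (Nat.pow_le_pow_right hp.one_lt.le hl)
  have hrl : r < p ^ l := lt_of_le_of_lt hr hml
  -- Step 1: rewrite the function through `Tb`
  have hfn : ∀ n : ℕ,
      ((((∑ j ∈ Finset.range (n + 1),
          if j % p ^ l = r then (Nat.choose n j : ℚ) else 0) / 2 ^ n : ℚ)) : ℚ_[p])
      = ((Tb p l n (r : ZMod (p ^ l)) : ℤ) : ℚ_[p]) / 2 ^ n := by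
    intro n
    have h1 : ((Tb p l n (r : ZMod (p ^ l)) : ℤ) : ℚ_[p])
        = ∑ j ∈ Finset.range (n + 1),
            if (j : ZMod (p ^ l)) = (r : ZMod (p ^ l)) then (Nat.choose n j : ℚ_[p]) else 0 := by
      show ((((∑ j ∈ Finset.range (n + 1), if (j : ZMod (p ^ l)) = (r : ZMod (p ^ l))
          then (n.choose j : ℤ) else 0) : ℤ)) : ℚ_[p]) = _
      push_cast
      rfl
    rw [Rat.cast_div, h1]
    congr 1
    · rw [Rat.cast_sum]
      refine Finset.sum_congr rfl fun j _ => ?_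
      have hcond : (j % p ^ l = r) ↔ ((j : ZMod (p ^ l)) = (r : ZMod (p ^ l))) := by
        rw [ZMod.natCast_eq_natCast_iff', Nat.mod_eq_of_lt hrl]
      rw [apply_ite (fun q : ℚ => (q : ℚ_[p]))]
      exact if_congr hcond (by push_cast; rfl) (by norm_num)
  have h2norm : ‖(2 : ℚ_[p])‖ = 1 := by
    have hcast : ((2 : ℤ) : ℚ_[p]) = 2 := by norm_num
    rw [← hcast]
    rcases lt_or_eq_of_le (Padic.norm_int_le_one (p := p) (2 : ℤ)) with h | h
    · exfalso
      have hdvd : (p : ℤ) ∣ 2 := (Padic.norm_intCast_lt_one_iff (k := 2)).mp h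
      have hdvd' : p ∣ 2 := by exact_mod_cast hdvd
      exact hp2 ((Nat.prime_dvd_prime_iff_eq hp Nat.prime_two).mp hdvd')
    · exact h
  -- Step 2: the estimate
  have hest : ∀ e n : ℕ, (p : ℤ) ^ (l + e) ∣ (n : ℤ) - (m : ℤ) →
      ‖((Tb p l n (r : ZMod (p ^ l)) : ℤ) : ℚ_[p]) / 2 ^ n - (m.choose r : ℚ_[p]) / 2 ^ m‖
        ≤ ((p : ℝ))⁻¹ ^ (e + 1) := by
    intro e n hdvd
    have hmn : m ≤ n := by
      by_contra hlt
      push_neg at hlt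
      have h1 : (0 : ℤ) < (m : ℤ) - n := by
        have := hlt; omega
      have h2 : (p : ℤ) ^ (l + e) ∣ (m : ℤ) - n := by
        have := hdvd.neg_right
        simpa using this
      have h3 : (p : ℤ) ^ (l + e) ≤ (m : ℤ) - n := Int.le_of_dvd h1 h2
      have h4 : (m : ℤ) < (p : ℤ) ^ s := by exact_mod_cast hm
      have h5 : (p : ℤ) ^ s ≤ (p : ℤ) ^ (l + e) := by
        apply pow_le_pow_right₀ (by exact_mod_cast hp.one_lt.le) (by omega)
      omega
    obtain ⟨b, rfl⟩ : ∃ b, n = m + b := ⟨n - m, by omega⟩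
    have hbdvd : p ^ (l + e) ∣ b := by
      have hint : ((p ^ (l + e) : ℕ) : ℤ) ∣ (b : ℤ) := by
        push_cast at hdvd ⊢
        simpa using hdvd
      exact_mod_cast hint
    obtain ⟨E, hE⟩ := Tb_decomp p l m r e b hml hr hbdvd
    rw [hE]
    have h2ne : (2 : ℚ_[p]) ≠ 0 := two_ne_zero
    have heq : (((m.choose r : ℤ) * 2 ^ b + (p : ℤ) ^ (e + 1) * E : ℤ) : ℚ_[p]) / 2 ^ (m + b)
        - (m.choose r : ℚ_[p]) / 2 ^ m
        = (p : ℚ_[p]) ^ (e + 1) * (E : ℚ_[p]) / 2 ^ (m + b) := by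
      push_cast
      rw [pow_add]
      field_simp
      ring
    rw [heq, norm_div, norm_mul, norm_pow, norm_pow, Padic.norm_p, h2norm, one_pow, div_one]
    calc ((p : ℝ))⁻¹ ^ (e + 1) * ‖(E : ℚ_[p])‖
        ≤ ((p : ℝ))⁻¹ ^ (e + 1) * 1 := by
          apply mul_le_mul_of_nonneg_left (Padic.norm_int_le_one E) (by positivity)
      _ = ((p : ℝ))⁻¹ ^ (e + 1) := mul_one _
  -- Step 3: assemble
  have hplt : (1 : ℝ) < p := by exact_mod_cast hp.one_lt
  have hinv1 : (p : ℝ)⁻¹ < 1 := inv_lt_one_of_one_lt₀ hplt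
  rw [Metric.tendsto_atTop]
  intro ε hε
  obtain ⟨e0, he0⟩ := exists_pow_lt_of_lt_one hε hinv1
  have hbound : ((p : ℝ)⁻¹) ^ (e0 + 1) < ε :=
    lt_of_le_of_lt (pow_le_pow_of_le_one (by positivity) hinv1.le (by omega)) he0
  obtain ⟨K, hK⟩ := Metric.tendsto_atTop.mp hN ((p : ℝ) ^ (-(l + e0 : ℕ) : ℤ)) (by positivity)
  refine ⟨K, fun k hk => ?_⟩
  have hdist := hK k hk
  rw [dist_eq_norm] at hdist
  have hdvd : (p : ℤ) ^ (l + e0) ∣ (N k : ℤ) - m := by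
    have hcast : (((N k : ℤ) - m : ℤ) : ℚ_[p]) = (N k : ℚ_[p]) - m := by push_cast; ring
    have := (Padic.norm_int_le_pow_iff_dvd ((N k : ℤ) - m) (l + e0)).mp
      (by rw [hcast]; exact le_of_lt hdist)
    exact_mod_cast this
  rw [dist_eq_norm, hfn (N k)]
  exact lt_of_le_of_lt (hest e0 (N k) hdvd) hbound
end

section
/- Let p ≠ 2 be a prime and let N_k be a sequence of natural numbers converging to 1 in ℚ_p. Then the rational numbers P(p divides S_{N_k}) = 2^{-N_k} · #{ω ∈ {0,1}^{N_k} : p | (ω₁ + ⋯ + ω_{N_k})} converge in ℚ_p to 1/2, and likewise P(p does not divide S_{N_k}) converges in ℚ_p to 1/2. -/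
open Filter Topology Finset

private lemma aux_gp (p : ℕ) [hp : Fact p.Prime] :
    (AddMonoidAlgebra.single (1 : ZMod p) (1 : ℤ)) ^ p = 1 := by
  rw [AddMonoidAlgebra.single_pow, one_pow, AddMonoidAlgebra.one_def]
  congr 1
  simp

private lemma aux_base (p : ℕ) [hp : Fact p.Prime] :
    ((p : ℕ) : AddMonoidAlgebra ℤ (ZMod p)) ∣
      (1 + AddMonoidAlgebra.single (1 : ZMod p) (1 : ℤ)) ^ p - 2 ^ p := by
  set g : AddMonoidAlgebra ℤ (ZMod p) := AddMonoidAlgebra.single (1 : ZMod p) (1 : ℤ) with hg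
  obtain ⟨q, hq⟩ : ∃ q, p = q + 1 + 1 := ⟨p - 2, by have := hp.out.two_le; omega⟩
  have hexp : (1 + g) ^ p =
      (∑ i ∈ range (q + 1), g ^ (i+1) * 1 ^ (p - (i+1)) * ((p.choose (i+1) : ℕ) :
        AddMonoidAlgebra ℤ (ZMod p))) + 1 + 1 := by
    rw [add_comm (1 : AddMonoidAlgebra ℤ (ZMod p)) g, add_pow]
    rw [show p + 1 = (q + 1 + 1) + 1 by omega, Finset.sum_range_succ, Finset.sum_range_succ']
    rw [show q + 1 + 1 = p from hq.symm]
    simp [aux_gp p, Nat.choose_self, ← hg]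
    rw [hg]; exact aux_gp p
  have hmid : ((p : ℕ) : AddMonoidAlgebra ℤ (ZMod p)) ∣
      ∑ i ∈ range (q + 1), g ^ (i+1) * 1 ^ (p - (i+1)) * ((p.choose (i+1) : ℕ) :
        AddMonoidAlgebra ℤ (ZMod p)) := by
    refine Finset.dvd_sum fun i hi => ?_
    have hd : p ∣ p.choose (i+1) :=
      hp.out.dvd_choose_self (Nat.succ_ne_zero i) (by simp at hi; omega)
    exact Dvd.dvd.mul_left (Nat.cast_dvd_cast hd) _
  have h3 : ((p : ℕ) : AddMonoidAlgebra ℤ (ZMod p)) ∣ (1 + 1 : AddMonoidAlgebra ℤ (ZMod p)) - 2 ^ p := by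
    have hz : (p : ℤ) ∣ 2 - 2 ^ p := by
      have h0 : ((2 - 2 ^ p : ℤ) : ZMod p) = 0 := by push_cast [ZMod.pow_card]; ring
      exact (ZMod.intCast_zmod_eq_zero_iff_dvd _ p).mp h0
    have := map_dvd (Int.castRingHom (AddMonoidAlgebra ℤ (ZMod p))) hz
    simp only [map_sub, map_pow, map_ofNat, map_intCast] at this
    convert this using 2 <;> simp [one_add_one_eq_two]
  calc ((p : ℕ) : AddMonoidAlgebra ℤ (ZMod p)) ∣
      (∑ i ∈ range (q + 1), g ^ (i+1) * 1 ^ (p - (i+1)) * ((p.choose (i+1) : ℕ) :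
        AddMonoidAlgebra ℤ (ZMod p))) + ((1 + 1) - 2 ^ p) := dvd_add hmid h3
    _ = (1 + g) ^ p - 2 ^ p := by rw [hexp]; ring

private lemma aux_pow (p : ℕ) [hp : Fact p.Prime] (m : ℕ) :
    ((p : ℕ) : AddMonoidAlgebra ℤ (ZMod p)) ^ m ∣
      (1 + AddMonoidAlgebra.single (1 : ZMod p) (1 : ℤ)) ^ (p ^ m) - 2 ^ (p ^ m) := by
  cases m with
  | zero => simpa using one_dvd _
  | succ k =>
    have h := dvd_sub_pow_of_dvd_sub (aux_base p) k
    rwa [← pow_mul, ← pow_mul, ← pow_succ'] at h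

private lemma aux_key (p : ℕ) [hp : Fact p.Prime] (m s : ℕ) :
    (p : ℤ) ^ m ∣ (∑ j ∈ Finset.range (p ^ m * s + 1 + 1),
        if p ∣ j then ((p ^ m * s + 1).choose j : ℤ) else 0) - 2 ^ (p ^ m * s) := by
  haveI : Fact (1 < p) := ⟨hp.out.one_lt⟩
  set R := AddMonoidAlgebra ℤ (ZMod p)
  set g : R := AddMonoidAlgebra.single (1 : ZMod p) (1 : ℤ) with hg
  have h1 : ((p : ℕ) : R) ^ m ∣ (1 + g) ^ (p ^ m * s) - 2 ^ (p ^ m * s) := by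
    have := dvd_trans (aux_pow p m)
      (sub_dvd_pow_sub_pow ((1 + g) ^ (p ^ m)) (2 ^ (p ^ m)) s)
    rwa [← pow_mul, ← pow_mul] at this
  have h2 : ((p : ℕ) : R) ^ m ∣ (1 + g) ^ (p ^ m * s + 1) - 2 ^ (p ^ m * s) * (1 + g) := by
    have := h1.mul_right (1 + g)
    rwa [sub_mul, ← pow_succ] at this
  obtain ⟨y, hy⟩ := h2
  have hcoef := congrArg (fun x : AddMonoidAlgebra ℤ (ZMod p) => x.coeff 0) hy
  -- LHS coefficient
  have hL1 : ((1 + g) ^ (p ^ m * s + 1)).coeff 0 =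
      ∑ j ∈ range (p ^ m * s + 1 + 1), if p ∣ j then ((p ^ m * s + 1).choose j : ℤ) else 0 := by
    rw [add_comm (1 : R) g, add_pow, AddMonoidAlgebra.coeff_sum, Finsupp.finset_sum_apply]
    refine Finset.sum_congr rfl fun k hk => ?_
    rw [one_pow, mul_one, hg, AddMonoidAlgebra.single_pow, one_pow,
      AddMonoidAlgebra.natCast_def, AddMonoidAlgebra.single_mul_single, add_zero, one_mul]
    rw [AddMonoidAlgebra.coeff_single, Finsupp.single_apply]
    simp only [nsmul_eq_mul, mul_one]
    by_cases hdk : p ∣ k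
    · rw [if_pos ((ZMod.natCast_eq_zero_iff k p).mpr hdk), if_pos hdk]
    · rw [if_neg (fun h => hdk ((ZMod.natCast_eq_zero_iff k p).mp h)), if_neg hdk]
  have hL2 : ((2 : R) ^ (p ^ m * s) * (1 + g)).coeff 0 = 2 ^ (p ^ m * s) := by
    have h2c : (2 : R) ^ (p ^ m * s) = AddMonoidAlgebra.single (0 : ZMod p) ((2 : ℤ) ^ (p ^ m * s)) := by
      rw [show (2 : R) = ((2 : ℤ) : R) by norm_cast, ← Int.cast_pow, AddMonoidAlgebra.intCast_def]
      norm_cast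
    rw [h2c, AddMonoidAlgebra.coeff_single_zero_mul, AddMonoidAlgebra.coeff_add, Finsupp.add_apply]
    have hg0 : (g : R).coeff 0 = 0 := by
      rw [hg, AddMonoidAlgebra.coeff_single, Finsupp.single_apply, if_neg (one_ne_zero)]
    rw [show (1 : R).coeff 0 = 1 by rw [AddMonoidAlgebra.one_def, AddMonoidAlgebra.coeff_single, Finsupp.single_apply, if_pos rfl]]
    rw [hg0]
    ring
  have hR : (((p : ℕ) : R) ^ m * y).coeff 0 = (p : ℤ) ^ m * y.coeff 0 := by
    rw [show ((p : ℕ) : R) ^ m = AddMonoidAlgebra.single (0 : ZMod p) ((p : ℤ) ^ m) by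
      rw [← Nat.cast_pow, AddMonoidAlgebra.natCast_def]; norm_cast]
    rw [AddMonoidAlgebra.coeff_single_zero_mul]
  rw [AddMonoidAlgebra.coeff_sub, Finsupp.sub_apply] at hcoef
  rw [hL1, hL2, hR] at hcoef
  exact ⟨y.coeff 0, hcoef⟩

private lemma norm_two_padic (p : ℕ) [hp : Fact p.Prime] (hp2 : p ≠ 2) :
    ‖(2 : ℚ_[p])‖ = 1 := by
  have h1 : ‖((2 : ℤ) : ℚ_[p])‖ ≤ 1 := Padic.norm_int_le_one 2
  have h2 : ¬ ‖((2 : ℤ) : ℚ_[p])‖ < 1 := by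
    rw [Padic.norm_intCast_lt_one_iff]
    intro hdvd
    exact hp2 ((Nat.prime_dvd_prime_iff_eq hp.out Nat.prime_two).mp (by exact_mod_cast hdvd))
  have h3 : ‖((2 : ℤ) : ℚ_[p])‖ = 1 := le_antisymm h1 (not_lt.mp h2)
  simpa using h3

/-- Asymptotic p-adic symmetry between divisibility and non-divisibility of `S_n` by `p`:
both `P(p ∣ S_{N_k})` and its complement converge to `1/2` in `ℚ_p` when `N_k → 1` in `ℚ_p`. -/
theorem padic_divisibility_symmetry (p : ℕ) [Fact p.Prime] (hp2 : p ≠ 2)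
    (N : ℕ → ℕ)
    (hN : Tendsto (fun k => ((N k : ℚ_[p]))) atTop (𝓝 (1 : ℚ_[p]))) :
    Tendsto
      (fun k =>
        ((((∑ j ∈ Finset.range (N k + 1),
              if p ∣ j then (Nat.choose (N k) j : ℚ) else 0) / 2 ^ (N k)) : ℚ) : ℚ_[p]))
      atTop (𝓝 ((1 : ℚ_[p]) / 2)) ∧
    Tendsto
      (fun k =>
        (((1 - (∑ j ∈ Finset.range (N k + 1),
              if p ∣ j then (Nat.choose (N k) j : ℚ) else 0) / 2 ^ (N k)) : ℚ) : ℚ_[p]))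
      atTop (𝓝 ((1 : ℚ_[p]) / 2)) := by
  have hp : p.Prime := Fact.out
  have hfirst : Tendsto
      (fun k =>
        ((((∑ j ∈ Finset.range (N k + 1),
              if p ∣ j then (Nat.choose (N k) j : ℚ) else 0) / 2 ^ (N k)) : ℚ) : ℚ_[p]))
      atTop (𝓝 ((1 : ℚ_[p]) / 2)) := by
    rw [Metric.tendsto_atTop]
    intro ε hε
    have hp1 : (1 : ℝ) < p := by exact_mod_cast hp.one_lt
    have hr1 : (p : ℝ)⁻¹ < 1 := by
      rw [inv_lt_one_iff₀]; right; exact hp1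
    obtain ⟨m0, hm0⟩ := exists_pow_lt_of_lt_one hε hr1
    set M := m0 + 1 with hM
    have hrball : (p : ℝ)⁻¹ ^ M < ε :=
      lt_of_le_of_lt (pow_le_pow_of_le_one (by positivity) hr1.le (by omega)) hm0
    obtain ⟨K, hK⟩ := Metric.tendsto_atTop.mp hN ((p : ℝ)⁻¹ ^ M) (by positivity)
    refine ⟨K, fun k hk => ?_⟩
    have hd := hK k hk
    rw [dist_eq_norm] at hd
    have hdvd : (p : ℤ) ^ M ∣ (N k : ℤ) - 1 := by
      refine (Padic.norm_int_le_pow_iff_dvd _ _).mp ?_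
      have : ‖(((N k : ℤ) - 1 : ℤ) : ℚ_[p])‖ < (p : ℝ)⁻¹ ^ M := by
        convert hd using 2
        · rfl
        push_cast
        ring
      rw [zpow_neg, zpow_natCast, ← inv_pow]
      exact this.le
    have hNk1 : 1 ≤ N k := by
      by_contra h
      have h0 : N k = 0 := by omega
      rw [h0] at hdvd
      have h1 : (p : ℤ) ^ M ∣ 1 := by
        have := hdvd.neg_right
        simpa using this
      have hle : (p : ℤ) ^ M ≤ 1 := Int.le_of_dvd one_pos h1
      have hge : (p : ℤ) ≤ (p : ℤ) ^ M :=
        le_self_pow₀ (by exact_mod_cast hp.one_lt.le) (by omega)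
      have : (2 : ℤ) ≤ (p : ℤ) := by exact_mod_cast hp.two_le
      linarith
    obtain ⟨s, hs⟩ : ∃ s : ℕ, N k = p ^ M * s + 1 := by
      obtain ⟨t, ht⟩ := hdvd
      have hppos : (0 : ℤ) < (p : ℤ) := by exact_mod_cast hp.pos
      have hpMpos : (0 : ℤ) < (p : ℤ) ^ M := by positivity
      have ht0 : 0 ≤ t := by nlinarith [Int.natCast_pos.mpr (by omega : 0 < N k)]
      refine ⟨t.toNat, ?_⟩
      have : (N k : ℤ) = (p : ℤ) ^ M * (t.toNat : ℤ) + 1 := by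
        rw [Int.toNat_of_nonneg ht0]; linarith
      exact_mod_cast this
    have hkey := aux_key p M s
    set D : ℤ := (∑ j ∈ Finset.range (p ^ M * s + 1 + 1),
        if p ∣ j then ((p ^ M * s + 1).choose j : ℤ) else 0) - 2 ^ (p ^ M * s) with hD
    have hnormD : ‖((D : ℤ) : ℚ_[p])‖ ≤ (p : ℝ)⁻¹ ^ M := by
      have h := (Padic.norm_int_le_pow_iff_dvd D M).mpr hkey
      rwa [zpow_neg, zpow_natCast, ← inv_pow] at h
    have hratq : ((∑ j ∈ Finset.range (N k + 1),
          if p ∣ j then (Nat.choose (N k) j : ℚ) else 0) / 2 ^ (N k) - 1/2 : ℚ)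
        = (D : ℚ) / 2 ^ (N k) := by
      rw [hs, hD]
      push_cast
      field_simp
      ring
    have hcast : ((((∑ j ∈ Finset.range (N k + 1),
          if p ∣ j then (Nat.choose (N k) j : ℚ) else 0) / 2 ^ (N k)) : ℚ) : ℚ_[p])
        - (1 : ℚ_[p])/2 = ((D : ℤ) : ℚ_[p]) / 2 ^ (N k) := by
      have := congrArg (fun x : ℚ => (x : ℚ_[p])) hratq
      push_cast at this
      convert this using 2 <;> push_cast <;> ring
    rw [dist_eq_norm, show ((1 : ℚ_[p])/2) = 1/2 from rfl, hcast, norm_div, norm_pow,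
      norm_two_padic p hp2, one_pow, div_one]
    exact lt_of_le_of_lt hnormD hrball
  refine ⟨hfirst, ?_⟩
  have hrw : (fun k =>
        (((1 - (∑ j ∈ Finset.range (N k + 1),
              if p ∣ j then (Nat.choose (N k) j : ℚ) else 0) / 2 ^ (N k)) : ℚ) : ℚ_[p]))
      = fun k => 1 - ((((∑ j ∈ Finset.range (N k + 1),
              if p ∣ j then (Nat.choose (N k) j : ℚ) else 0) / 2 ^ (N k)) : ℚ) : ℚ_[p]) := by
    funext k
    push_cast
    ring
  rw [hrw, show ((1 : ℚ_[p])/2) = 1 - 1/2 by norm_num]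
  exact tendsto_const_nhds.sub hfirst
end
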